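/- For 1 ≤ p < ∞, s > 0, and any x ∈ ℓ^p, the tail-norm identity Σ_{n≥k} |(h_p^(s)(x))_n|^p = (Σ_{n≥k} |x_n|^p)^s holds for every k ≥ 1; in particular ‖h_p^(s)(x)‖_p^p = ‖x‖_p^{ps}. -/

import Mathlib

open scoped ENNReal
open Filter

noncomputable def lpTail (p : ℝ≥0∞) (x : ℕ → ℂ) (n : ℕ) : ℝ :=
  ∑' k : ℕ, ‖x (n + k)‖ ^ p.toReal

noncomputable def hMap (p : ℝ≥0∞) (s : ℝ) (x : ℕ → ℂ) (n : ℕ) : ℂ :=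
  if x n = 0 then 0
  else (x n / ‖x n‖) *
    ((((lpTail p x n) ^ s - (lpTail p x (n + 1)) ^ s) ^ (1 / p.toReal) : ℝ) : ℂ)


/-- the tail-norm identity for `h_p^(s)`; in particular
`‖h_p^(s)(x)‖_p^p = ‖x‖_p^{ps}`. -/
theorem hMap_tail_identity (p : ℝ≥0∞) [Fact (1 ≤ p)] (hp : p ≠ ∞) (s : ℝ) (hs : 0 < s)
    (x : lp (fun _ : ℕ => ℂ) p) :
    (∀ k : ℕ, ∑' n : ℕ, ‖hMap p s x (k + n)‖ ^ p.toReal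
        = (∑' n : ℕ, ‖x (k + n)‖ ^ p.toReal) ^ s) ∧
    ‖x‖ ^ (p.toReal * s) = ∑' n : ℕ, ‖hMap p s x n‖ ^ p.toReal := by
  have hp1 : (1 : ℝ≥0∞) ≤ p := Fact.out
  have hpt : 0 < p.toReal := ENNReal.toReal_pos (zero_lt_one.trans_le hp1).ne' hp
  set g : ℕ → ℝ := fun n => ‖x n‖ ^ p.toReal with hgdef
  have hgnn : ∀ n, 0 ≤ g n := fun n => Real.rpow_nonneg (norm_nonneg _) _
  have hsum : Summable g := (lp.memℓp x).summable hpt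
  set T : ℕ → ℝ := lpTail p x with hTdef
  have hT : ∀ n, T n = ∑' k, g (n + k) := fun n => rfl
  have hTnn : ∀ n, 0 ≤ T n := fun n => tsum_nonneg (fun k => hgnn _)
  have hTrec : ∀ n, T n = g n + T (n + 1) := by
    intro n
    have hsn : Summable (fun k => g (n + k)) :=
      hsum.comp_injective (add_right_injective n)
    rw [hT, Summable.tsum_eq_zero_add hsn, Nat.add_zero]
    congr 1
    rw [hT]
    refine tsum_congr fun k => ?_
    congr 1
    omega
  have hTmono : ∀ n, T (n + 1) ≤ T n := fun n => by
    rw [hTrec n]; nlinarith [hgnn n]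
  have hT0 : Tendsto T atTop (nhds 0) := by
    have h := tendsto_sum_nat_add g
    refine h.congr fun i => ?_
    rw [hT]
    exact tsum_congr fun k => by rw [Nat.add_comm]
  set F : ℕ → ℝ := fun n => T n ^ s with hFdef
  have hFmono : ∀ n, F (n + 1) ≤ F n := fun n =>
    Real.rpow_le_rpow (hTnn _) (hTmono n) hs.le
  have hF0 : Tendsto F atTop (nhds 0) := by
    have hc : ContinuousAt (fun t : ℝ => t ^ s) 0 :=
      Real.continuousAt_rpow_const 0 s (Or.inr hs.le)
    have := hc.tendsto.comp hT0
    have h2 : Tendsto ((fun t : ℝ => t ^ s) ∘ T) atTop (nhds 0) := by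
      simpa [Real.zero_rpow hs.ne'] using this
    exact h2
  have hpt_eq : ∀ n, ‖hMap p s x n‖ ^ p.toReal = F n - F (n + 1) := by
    intro n
    by_cases hx : (x : ℕ → ℂ) n = 0
    · have hTeq : T n = T (n + 1) := by
        rw [hTrec n]
        simp [hgdef, hx, Real.zero_rpow hpt.ne']
      simp [hMap, hx, hFdef, ← hTdef, hTeq, Real.zero_rpow hpt.ne']
    · have hd : 0 ≤ F n - F (n + 1) := sub_nonneg.2 (hFmono n)
      have hnx : ‖(x : ℕ → ℂ) n‖ ≠ 0 := norm_ne_zero_iff.2 hx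
      have h1 : ‖(x : ℕ → ℂ) n / (‖(x : ℕ → ℂ) n‖ : ℂ)‖ = 1 := by
        rw [norm_div, Complex.norm_real, Real.norm_eq_abs, abs_norm, div_self hnx]
      rw [hMap, if_neg hx, norm_mul, h1, one_mul, Complex.norm_real,
        Real.norm_eq_abs]
      rw [show lpTail p (⇑x) n ^ s - lpTail p (⇑x) (n + 1) ^ s = F n - F (n + 1) from rfl]
      rw [abs_of_nonneg (Real.rpow_nonneg hd _), ← Real.rpow_mul hd,
        one_div, inv_mul_cancel₀ hpt.ne', Real.rpow_one]
  have hHasSum : ∀ k, HasSum (fun n => ‖hMap p s x (k + n)‖ ^ p.toReal) (F k) := by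
    intro k
    have hnn : ∀ n, 0 ≤ ‖hMap p s x (k + n)‖ ^ p.toReal :=
      fun n => Real.rpow_nonneg (norm_nonneg _) _
    rw [hasSum_iff_tendsto_nat_of_nonneg hnn]
    have hps : ∀ N, ∑ i ∈ Finset.range N, ‖hMap p s x (k + i)‖ ^ p.toReal
        = F k - F (k + N) := by
      intro N
      calc ∑ i ∈ Finset.range N, ‖hMap p s x (k + i)‖ ^ p.toReal
          = ∑ i ∈ Finset.range N, (F (k + i) - F (k + i + 1)) :=
            Finset.sum_congr rfl fun i _ => hpt_eq _
        _ = F k - F (k + N) := by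
            have := Finset.sum_range_sub' (fun i => F (k + i)) N
            simpa [add_assoc] using this
    simp only [hps]
    have htail : Tendsto (fun N => F (k + N)) atTop (nhds 0) := by
      have := hF0.comp (tendsto_add_atTop_nat k)
      refine this.congr fun N => ?_
      simp [Nat.add_comm]
    simpa using tendsto_const_nhds.sub htail
  have hfirst : ∀ k : ℕ, ∑' n : ℕ, ‖hMap p s x (k + n)‖ ^ p.toReal
      = (∑' n : ℕ, ‖x (k + n)‖ ^ p.toReal) ^ s := fun k => (hHasSum k).tsum_eq
  refine ⟨hfirst, ?_⟩
  have h0 : ∑' n : ℕ, ‖hMap p s x n‖ ^ p.toReal = F 0 := by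
    rw [← (hHasSum 0).tsum_eq]
    exact tsum_congr fun n => by rw [Nat.zero_add]
  rw [h0, hFdef]
  have hnorm : ‖x‖ ^ p.toReal = T 0 := by
    rw [lp.norm_rpow_eq_tsum hpt, hT]
    exact tsum_congr fun n => by rw [Nat.zero_add]
  rw [Real.rpow_mul (norm_nonneg x), hnorm]
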